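/- For every m ≥ 1, the number of binary (0,m,2)-nets in which all points have coordinates of the form k·2^{-m}, 0 ≤ k < 2^m, is exactly 2^{m·2^{m-1}}. -/

import Mathlib

/-- `P` is (the integer-grid version of) a binary `(0,m,2)`-net in which all points have
coordinates of the form `k·2^{-m}`: identifying the point `(k₁ 2^{-m}, k₂ 2^{-m})` with the
pair `(k₁, k₂)`, the set consists of `2^m` grid points and every dyadic rectangle of area
`2^{-m}`, i.e. of shape `2^{-j} × 2^{-(m-j)}`, contains exactly one point
(the point `(k₁ 2^{-m}, k₂ 2^{-m})` lies in the rectangle indexed by `(a, b)` iff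
`k₁ / 2^{m-j} = a` and `k₂ / 2^j = b`). -/
def IsBinaryNet (m : ℕ) (P : Finset (ℕ × ℕ)) : Prop :=
  P ⊆ Finset.range (2 ^ m) ×ˢ Finset.range (2 ^ m) ∧
  P.card = 2 ^ m ∧
  ∀ j ≤ m, ∀ a < 2 ^ j, ∀ b < 2 ^ (m - j),
    (P.filter (fun q => q.1 / 2 ^ (m - j) = a ∧ q.2 / 2 ^ j = b)).card = 1

open Finset

-- arithmetic helpers
lemma tp_pos (n : ℕ) : 0 < 2 ^ n := pow_pos two_pos n

lemma div_double (v r j : ℕ) (hr : r < 2) : (2 * v + r) / 2 ^ (j + 1) = v / 2 ^ j := by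
  have h2 : (2 * v + r) / 2 = v := by omega
  rw [pow_succ', ← Nat.div_div_eq_div_mul, h2]

lemma upper_div {m j : ℕ} (k : ℕ) (hj : j ≤ m) :
    (2 ^ m + k) / 2 ^ (m - j) = 2 ^ j + k / 2 ^ (m - j) := by
  have h : (2:ℕ) ^ m = 2 ^ (m - j) * 2 ^ j := by rw [← pow_add]; congr 1; omega
  rw [h, add_comm (2 ^ (m - j) * 2 ^ j) k, Nat.add_mul_div_left k _ (tp_pos (m - j)), add_comm]

lemma div_lt_iff_lt_pow {m j : ℕ} (x : ℕ) (hj : j ≤ m) :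
    x / 2 ^ (m - j) < 2 ^ j ↔ x < 2 ^ m := by
  have h : (2:ℕ) ^ j * 2 ^ (m - j) = 2 ^ m := by rw [← pow_add]; congr 1; omega
  rw [Nat.div_lt_iff_lt_mul (tp_pos _), h]

lemma div_pow_zero (x n : ℕ) : x / 2 ^ n = 0 ↔ x < 2 ^ n :=
  by rw [Nat.div_eq_zero_iff]; have := tp_pos n; omega

lemma div_pow_one {x m : ℕ} (hx : x < 2 ^ (m + 1)) : x / 2 ^ m = 1 ↔ 2 ^ m ≤ x := by
  have hp := tp_pos m
  have h1 : (2:ℕ) ^ (m + 1) = 2 ^ m * 2 := pow_succ 2 m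
  constructor
  · intro h
    exact (Nat.one_le_div_iff hp).mp (by omega)
  · intro h
    have h2 : 1 ≤ x / 2 ^ m := (Nat.one_le_div_iff hp).mpr h
    have h3 : x / 2 ^ m < 2 := by rw [Nat.div_lt_iff_lt_mul hp]; omega
    omega

-- filter helpers
lemma exists_of_card_filter_one {α : Type*} {s : Finset α} {p : α → Prop} [DecidablePred p]
    (h : (s.filter p).card = 1) : ∃ a ∈ s, p a := by
  have hne : (s.filter p).Nonempty := card_pos.mp (by omega)
  obtain ⟨a, ha⟩ := hne
  exact ⟨a, (mem_filter.mp ha).1, (mem_filter.mp ha).2⟩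

lemma eq_of_card_filter_one {α : Type*} {s : Finset α} {p : α → Prop} [DecidablePred p]
    (h : (s.filter p).card = 1) {a b : α} (ha : a ∈ s) (hpa : p a) (hb : b ∈ s) (hpb : p b) :
    a = b :=
  card_le_one.mp h.le a (mem_filter.mpr ⟨ha, hpa⟩) b (mem_filter.mpr ⟨hb, hpb⟩)

-- net basics
lemma net_bounds {m : ℕ} {P : Finset (ℕ × ℕ)} (hP : IsBinaryNet m P) {q : ℕ × ℕ} (hq : q ∈ P) :
    q.1 < 2 ^ m ∧ q.2 < 2 ^ m := by
  have h := hP.1 hq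
  simpa [Finset.mem_product, Finset.mem_range] using h

lemma net_row {m : ℕ} {P : Finset (ℕ × ℕ)} (hP : IsBinaryNet m P) {b : ℕ} (hb : b < 2 ^ m) :
    (P.filter (fun q => q.2 = b)).card = 1 := by
  have h := hP.2.2 0 (Nat.zero_le m) 0 (by norm_num) b (by simpa using hb)
  rw [← h]
  congr 1
  apply filter_congr
  intro q hq
  have h1 := (net_bounds hP hq).1
  simp [Nat.div_eq_of_lt h1]

lemma net_col {m : ℕ} {P : Finset (ℕ × ℕ)} (hP : IsBinaryNet m P) {a : ℕ} (ha : a < 2 ^ m) :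
    (P.filter (fun q => q.1 = a)).card = 1 := by
  have h := hP.2.2 m le_rfl a ha 0 (by simp)
  rw [← h]
  congr 1
  apply filter_congr
  intro q hq
  have h2 := (net_bounds hP hq).2
  simp [Nat.div_eq_of_lt h2]
lemma net_exists_col {m : ℕ} {P : Finset (ℕ × ℕ)} (hP : IsBinaryNet m P) {a : ℕ}
    (ha : a < 2 ^ m) : ∃ q ∈ P, q.1 = a :=
  exists_of_card_filter_one (net_col hP ha)

lemma net_exists_row {m : ℕ} {P : Finset (ℕ × ℕ)} (hP : IsBinaryNet m P) {b : ℕ}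
    (hb : b < 2 ^ m) : ∃ q ∈ P, q.2 = b :=
  exists_of_card_filter_one (net_row hP hb)

lemma net_col_inj {m : ℕ} {P : Finset (ℕ × ℕ)} (hP : IsBinaryNet m P) {q q' : ℕ × ℕ}
    (hq : q ∈ P) (hq' : q' ∈ P) (h : q.1 = q'.1) : q = q' :=
  eq_of_card_filter_one (net_col hP ((net_bounds hP hq).1)) hq rfl hq' h.symm

lemma net_row_inj {m : ℕ} {P : Finset (ℕ × ℕ)} (hP : IsBinaryNet m P) {q q' : ℕ × ℕ}
    (hq : q ∈ P) (hq' : q' ∈ P) (h : q.2 = q'.2) : q = q' :=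
  eq_of_card_filter_one (net_row hP ((net_bounds hP hq).2)) hq rfl hq' h.symm

lemma net_half_card {m : ℕ} {P : Finset (ℕ × ℕ)} (hP : IsBinaryNet (m + 1) P) :
    (P.filter (fun q => q.1 < 2 ^ m)).card = 2 ^ m := by
  have hinj : Set.InjOn (Prod.fst : ℕ × ℕ → ℕ) ((P.filter (fun q => q.1 < 2 ^ m) : Finset (ℕ × ℕ)) : Set (ℕ × ℕ)) := by
    intro q hq q' hq' h
    simp only [coe_filter, Set.mem_setOf_eq] at hq hq'
    exact net_col_inj hP hq.1 hq'.1 h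
  have himg : (P.filter (fun q => q.1 < 2 ^ m)).image Prod.fst = Finset.range (2 ^ m) := by
    ext a
    simp only [mem_image, mem_filter, mem_range]
    constructor
    · rintro ⟨q, ⟨_, hlt⟩, rfl⟩; exact hlt
    · intro ha
      have ha' : a < 2 ^ (m + 1) := lt_of_lt_of_le ha (Nat.pow_le_pow_right (by norm_num) (by omega))
      obtain ⟨q, hq, hq1⟩ := net_exists_col hP ha'
      exact ⟨q, ⟨hq, by omega⟩, hq1⟩
  rw [← card_image_of_injOn hinj, himg, card_range]

lemma net_upper_card {m : ℕ} {P : Finset (ℕ × ℕ)} (hP : IsBinaryNet (m + 1) P) :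
    (P.filter (fun q => 2 ^ m ≤ q.1)).card = 2 ^ m := by
  have h := card_filter_add_card_filter_not (s := P) (p := fun q : ℕ × ℕ => q.1 < 2 ^ m)
  have h2 : (P.filter (fun q : ℕ × ℕ => ¬ q.1 < 2 ^ m)) = P.filter (fun q => 2 ^ m ≤ q.1) := by
    apply filter_congr; intro q hq; omega
  have h6 := congrArg Finset.card h2
  have h3 := net_half_card hP
  have h4 := hP.2.1
  have h5 : (2:ℕ) ^ (m + 1) = 2 ^ m * 2 := pow_succ 2 m
  omega

-- the bit function and the glue map
def ebit (E : Finset ℕ) (v : ℕ) : ℕ := if v ∈ E then 1 else 0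

lemma ebit_le (E : Finset ℕ) (v : ℕ) : ebit E v ≤ 1 := by
  unfold ebit; split <;> omega

def tmap (m : ℕ) (P₀ P₁ : Finset (ℕ × ℕ)) (E : Finset ℕ) : Finset (ℕ × ℕ) :=
  P₀.image (fun q => (q.1, 2 * q.2 + ebit E q.2)) ∪
  P₁.image (fun q => (2 ^ m + q.1, 2 * q.2 + 1 - ebit E q.2))

lemma phi0_inj (E : Finset ℕ) :
    Function.Injective (fun q : ℕ × ℕ => (q.1, 2 * q.2 + ebit E q.2)) := by
  intro q q' h
  simp only [Prod.mk.injEq] at h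
  have e1 := ebit_le E q.2
  have e2 := ebit_le E q'.2
  have h2 : q.2 = q'.2 := by omega
  exact Prod.ext h.1 h2

lemma phi1_inj (E : Finset ℕ) (m : ℕ) :
    Function.Injective (fun q : ℕ × ℕ => (2 ^ m + q.1, 2 * q.2 + 1 - ebit E q.2)) := by
  intro q q' h
  simp only [Prod.mk.injEq] at h
  have e1 := ebit_le E q.2
  have e2 := ebit_le E q'.2
  have h2 : q.2 = q'.2 := by omega
  exact Prod.ext (by omega) h2
lemma tmap_isNet {m : ℕ} {P₀ P₁ : Finset (ℕ × ℕ)} {E : Finset ℕ}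
    (h₀ : IsBinaryNet m P₀) (h₁ : IsBinaryNet m P₁) :
    IsBinaryNet (m + 1) (tmap m P₀ P₁ E) := by
  have hp2 : (2:ℕ) ^ (m + 1) = 2 ^ m * 2 := pow_succ 2 m
  refine ⟨?_, ?_, ?_⟩
  · -- subset
    intro q hq
    rcases mem_union.mp hq with h | h
    · obtain ⟨p, hp, rfl⟩ := mem_image.mp h
      have hb := net_bounds h₀ hp
      have he := ebit_le E p.2
      simp only [mem_product, mem_range]
      exact ⟨by omega, by omega⟩
    · obtain ⟨p, hp, rfl⟩ := mem_image.mp h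
      have hb := net_bounds h₁ hp
      have he := ebit_le E p.2
      simp only [mem_product, mem_range]
      exact ⟨by omega, by omega⟩
  · -- card
    have hdisj : Disjoint (P₀.image (fun q => (q.1, 2 * q.2 + ebit E q.2)))
        (P₁.image (fun q => (2 ^ m + q.1, 2 * q.2 + 1 - ebit E q.2))) := by
      rw [disjoint_left]
      rintro q hq hq'
      obtain ⟨p, hp, rfl⟩ := mem_image.mp hq
      obtain ⟨p', hp', heq⟩ := mem_image.mp hq'
      have hb := net_bounds h₀ hp
      have h1 : (2 ^ m + p'.1 : ℕ) = p.1 := congrArg Prod.fst heq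
      omega
    rw [tmap, card_union_of_disjoint hdisj, card_image_of_injective _ (phi0_inj E),
        card_image_of_injective _ (phi1_inj E m), h₀.2.1, h₁.2.1]
    omega
  · -- rectangle conditions
    intro j hj a ha b hb
    rw [tmap, filter_union]
    rcases j with _ | j'
    · -- j = 0
      have ha0 : a = 0 := by omega
      subst ha0
      simp only [Nat.sub_zero, pow_zero, Nat.div_one] at hb ⊢
      have hb2 : b / 2 < 2 ^ m := by omega
      by_cases hbe : ebit E (b / 2) = b % 2
      · have hB : (P₁.image (fun q => (2 ^ m + q.1, 2 * q.2 + 1 - ebit E q.2))).filter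
            (fun q => q.1 / 2 ^ (m + 1) = 0 ∧ q.2 = b) = ∅ := by
          rw [filter_eq_empty_iff]
          intro q hq
          obtain ⟨p, hp, rfl⟩ := mem_image.mp hq
          rintro ⟨h1, h2⟩
          have h2' : 2 * p.2 + 1 - ebit E p.2 = b := h2
          have he := ebit_le E p.2
          have hpv : p.2 = b / 2 := by omega
          rw [hpv] at h2'
          have he2 := ebit_le E (b / 2)
          omega
        have hA : (P₀.image (fun q => (q.1, 2 * q.2 + ebit E q.2))).filter
            (fun q => q.1 / 2 ^ (m + 1) = 0 ∧ q.2 = b)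
            = (P₀.filter (fun q => q.2 = b / 2)).image
              (fun q => (q.1, 2 * q.2 + ebit E q.2)) := by
          rw [filter_image]
          congr 1
          apply filter_congr
          intro q hq
          have hq1 := (net_bounds h₀ hq).1
          have he := ebit_le E q.2
          constructor
          · rintro ⟨h1, h2⟩
            have h2' : 2 * q.2 + ebit E q.2 = b := h2
            omega
          · intro h1
            refine ⟨Nat.div_eq_of_lt (by omega), ?_⟩
            show 2 * q.2 + ebit E q.2 = b
            rw [h1, hbe]
            omega
        rw [hA, hB, union_empty, card_image_of_injective _ (phi0_inj E)]
        exact net_row h₀ hb2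
      · have hA : (P₀.image (fun q => (q.1, 2 * q.2 + ebit E q.2))).filter
            (fun q => q.1 / 2 ^ (m + 1) = 0 ∧ q.2 = b) = ∅ := by
          rw [filter_eq_empty_iff]
          intro q hq
          obtain ⟨p, hp, rfl⟩ := mem_image.mp hq
          rintro ⟨h1, h2⟩
          have h2' : 2 * p.2 + ebit E p.2 = b := h2
          have he := ebit_le E p.2
          have hpv : p.2 = b / 2 := by omega
          rw [hpv] at h2'
          exact hbe (by omega)
        have hB : (P₁.image (fun q => (2 ^ m + q.1, 2 * q.2 + 1 - ebit E q.2))).filter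
            (fun q => q.1 / 2 ^ (m + 1) = 0 ∧ q.2 = b)
            = (P₁.filter (fun q => q.2 = b / 2)).image
              (fun q => (2 ^ m + q.1, 2 * q.2 + 1 - ebit E q.2)) := by
          rw [filter_image]
          congr 1
          apply filter_congr
          intro q hq
          have hq1 := (net_bounds h₁ hq).1
          have he := ebit_le E q.2
          constructor
          · rintro ⟨h1, h2⟩
            have h2' : 2 * q.2 + 1 - ebit E q.2 = b := h2
            omega
          · intro h1
            refine ⟨Nat.div_eq_of_lt (by omega), ?_⟩
            show 2 * q.2 + 1 - ebit E q.2 = b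
            rw [h1]
            have he2 := ebit_le E (b / 2)
            omega
        rw [hA, hB, empty_union, card_image_of_injective _ (phi1_inj E m)]
        exact net_row h₁ hb2
    · -- j = j' + 1
      have hj' : j' ≤ m := by omega
      simp only [Nat.succ_sub_succ] at hb ⊢
      rcases lt_or_ge a (2 ^ j') with haj | haj
      · -- lower half rectangle: B contributes nothing
        have hB : (P₁.image (fun q => (2 ^ m + q.1, 2 * q.2 + 1 - ebit E q.2))).filter
            (fun q => q.1 / 2 ^ (m - j') = a ∧ q.2 / 2 ^ (j' + 1) = b) = ∅ := by
          rw [filter_eq_empty_iff]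
          intro q hq
          obtain ⟨p, hp, rfl⟩ := mem_image.mp hq
          intro hpq
          have h1' : (2 ^ m + p.1) / 2 ^ (m - j') = a := hpq.1
          rw [upper_div p.1 hj'] at h1'
          have hle : 2 ^ j' ≤ a := h1' ▸ Nat.le_add_right _ _
          exact absurd haj (not_lt.mpr hle)
        have hA : (P₀.image (fun q => (q.1, 2 * q.2 + ebit E q.2))).filter
            (fun q => q.1 / 2 ^ (m - j') = a ∧ q.2 / 2 ^ (j' + 1) = b)
            = (P₀.filter (fun q => q.1 / 2 ^ (m - j') = a ∧ q.2 / 2 ^ j' = b)).image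
              (fun q => (q.1, 2 * q.2 + ebit E q.2)) := by
          rw [filter_image]
          congr 1
          apply filter_congr
          intro q hq
          have he := ebit_le E q.2
          have hd : (2 * q.2 + ebit E q.2) / 2 ^ (j' + 1) = q.2 / 2 ^ j' :=
            div_double q.2 (ebit E q.2) j' (by omega)
          show (q.1 / 2 ^ (m - j') = a ∧ (2 * q.2 + ebit E q.2) / 2 ^ (j' + 1) = b) ↔ _
          rw [hd]
        rw [hA, hB, union_empty, card_image_of_injective _ (phi0_inj E)]
        exact h₀.2.2 j' hj' a haj b hb
      · -- upper half rectangle: A contributes nothing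
        have hA : (P₀.image (fun q => (q.1, 2 * q.2 + ebit E q.2))).filter
            (fun q => q.1 / 2 ^ (m - j') = a ∧ q.2 / 2 ^ (j' + 1) = b) = ∅ := by
          rw [filter_eq_empty_iff]
          intro q hq
          obtain ⟨p, hp, rfl⟩ := mem_image.mp hq
          intro hpq
          have h1' : p.1 / 2 ^ (m - j') = a := hpq.1
          have hlt : p.1 / 2 ^ (m - j') < 2 ^ j' :=
            (div_lt_iff_lt_pow p.1 hj').mpr (net_bounds h₀ hp).1
          rw [h1'] at hlt
          exact absurd hlt (not_lt.mpr haj)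
        have hB : (P₁.image (fun q => (2 ^ m + q.1, 2 * q.2 + 1 - ebit E q.2))).filter
            (fun q => q.1 / 2 ^ (m - j') = a ∧ q.2 / 2 ^ (j' + 1) = b)
            = (P₁.filter (fun q => q.1 / 2 ^ (m - j') = a - 2 ^ j' ∧ q.2 / 2 ^ j' = b)).image
              (fun q => (2 ^ m + q.1, 2 * q.2 + 1 - ebit E q.2)) := by
          rw [filter_image]
          congr 1
          apply filter_congr
          intro q hq
          have he := ebit_le E q.2
          have hd : (2 * q.2 + 1 - ebit E q.2) / 2 ^ (j' + 1) = q.2 / 2 ^ j' := by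
            rcases Nat.le_one_iff_eq_zero_or_eq_one.mp he with h | h
            · rw [h]; exact div_double q.2 1 j' (by omega)
            · rw [h]
              have : 2 * q.2 + 1 - 1 = 2 * q.2 + 0 := by omega
              rw [this]
              exact div_double q.2 0 j' (by omega)
          show ((2 ^ m + q.1) / 2 ^ (m - j') = a ∧ (2 * q.2 + 1 - ebit E q.2) / 2 ^ (j' + 1) = b) ↔ _
          rw [hd, upper_div q.1 hj']
          constructor
          · rintro ⟨hx, hy⟩; exact ⟨by omega, hy⟩
          · rintro ⟨hx, hy⟩; exact ⟨by omega, hy⟩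
        rw [hA, hB, empty_union, card_image_of_injective _ (phi1_inj E m)]
        have hps : (2:ℕ) ^ (j' + 1) = 2 ^ j' * 2 := pow_succ 2 j'
        exact h₁.2.2 j' hj' (a - 2 ^ j') (by omega) b hb
lemma tmap_lower {m : ℕ} {P₀ P₁ : Finset (ℕ × ℕ)} {E : Finset ℕ} (h₀ : IsBinaryNet m P₀) :
    ((tmap m P₀ P₁ E).filter (fun q => q.1 < 2 ^ m)).image (fun q => (q.1, q.2 / 2)) = P₀ := by
  rw [tmap, filter_union]
  have hA : (P₀.image (fun q => (q.1, 2 * q.2 + ebit E q.2))).filter (fun q => q.1 < 2 ^ m)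
      = P₀.image (fun q => (q.1, 2 * q.2 + ebit E q.2)) := by
    rw [filter_eq_self]
    intro q hq
    obtain ⟨p, hp, rfl⟩ := mem_image.mp hq
    exact (net_bounds h₀ hp).1
  have hB : (P₁.image (fun q => (2 ^ m + q.1, 2 * q.2 + 1 - ebit E q.2))).filter
      (fun q => q.1 < 2 ^ m) = ∅ := by
    rw [filter_eq_empty_iff]
    intro q hq
    obtain ⟨p, hp, rfl⟩ := mem_image.mp hq
    intro hlt
    have : 2 ^ m + p.1 < 2 ^ m := hlt
    omega
  rw [hA, hB, union_empty, image_image]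
  have hfun : ((fun q : ℕ × ℕ => (q.1, q.2 / 2)) ∘ (fun q : ℕ × ℕ => (q.1, 2 * q.2 + ebit E q.2)))
      = id := by
    funext q
    have he := ebit_le E q.2
    show (q.1, (2 * q.2 + ebit E q.2) / 2) = q
    have h2 : (2 * q.2 + ebit E q.2) / 2 = q.2 := by omega
    rw [h2]
  rw [hfun, image_id]

lemma tmap_upper {m : ℕ} {P₀ P₁ : Finset (ℕ × ℕ)} {E : Finset ℕ}
    (h₀ : IsBinaryNet m P₀) (h₁ : IsBinaryNet m P₁) :
    ((tmap m P₀ P₁ E).filter (fun q => 2 ^ m ≤ q.1)).image (fun q => (q.1 - 2 ^ m, q.2 / 2))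
      = P₁ := by
  rw [tmap, filter_union]
  have hA : (P₀.image (fun q => (q.1, 2 * q.2 + ebit E q.2))).filter (fun q => 2 ^ m ≤ q.1)
      = ∅ := by
    rw [filter_eq_empty_iff]
    intro q hq
    obtain ⟨p, hp, rfl⟩ := mem_image.mp hq
    intro hle
    have h1 : 2 ^ m ≤ p.1 := hle
    have h2 := (net_bounds h₀ hp).1
    omega
  have hB : (P₁.image (fun q => (2 ^ m + q.1, 2 * q.2 + 1 - ebit E q.2))).filter
      (fun q => 2 ^ m ≤ q.1)
      = P₁.image (fun q => (2 ^ m + q.1, 2 * q.2 + 1 - ebit E q.2)) := by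
    rw [filter_eq_self]
    intro q hq
    obtain ⟨p, hp, rfl⟩ := mem_image.mp hq
    show 2 ^ m ≤ 2 ^ m + p.1
    omega
  rw [hA, hB, empty_union, image_image]
  have hfun : ((fun q : ℕ × ℕ => (q.1 - 2 ^ m, q.2 / 2)) ∘
      (fun q : ℕ × ℕ => (2 ^ m + q.1, 2 * q.2 + 1 - ebit E q.2))) = id := by
    funext q
    have he := ebit_le E q.2
    show (2 ^ m + q.1 - 2 ^ m, (2 * q.2 + 1 - ebit E q.2) / 2) = q
    have h1 : 2 ^ m + q.1 - 2 ^ m = q.1 := by omega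
    have h2 : (2 * q.2 + 1 - ebit E q.2) / 2 = q.2 := by omega
    rw [h1, h2]
  rw [hfun, image_id]

lemma tmap_E {m : ℕ} {P₀ P₁ : Finset (ℕ × ℕ)} {E : Finset ℕ}
    (h₀ : IsBinaryNet m P₀) (hE : E ⊆ Finset.range (2 ^ m)) :
    (Finset.range (2 ^ m)).filter
      (fun v => ∃ q ∈ tmap m P₀ P₁ E, q.1 < 2 ^ m ∧ q.2 = 2 * v + 1) = E := by
  ext v
  simp only [mem_filter, mem_range]
  constructor
  · rintro ⟨hv, q, hq, hql, hq2⟩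
    rcases mem_union.mp hq with h | h
    · obtain ⟨p, hp, rfl⟩ := mem_image.mp h
      have h2 : 2 * p.2 + ebit E p.2 = 2 * v + 1 := hq2
      by_cases hpe : p.2 ∈ E
      · have heb : ebit E p.2 = 1 := if_pos hpe
        have hpv : p.2 = v := by omega
        rwa [hpv] at hpe
      · have heb : ebit E p.2 = 0 := if_neg hpe
        omega
    · obtain ⟨p, hp, rfl⟩ := mem_image.mp h
      have h1 : 2 ^ m + p.1 < 2 ^ m := hql
      omega
  · intro hv
    have hvr := mem_range.mp (hE hv)
    refine ⟨hvr, ?_⟩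
    obtain ⟨p, hp, hp2⟩ := net_exists_row h₀ hvr
    refine ⟨(p.1, 2 * p.2 + ebit E p.2), mem_union_left _ (mem_image_of_mem _ hp),
      (net_bounds h₀ hp).1, ?_⟩
    show 2 * p.2 + ebit E p.2 = 2 * v + 1
    rw [hp2]
    have : ebit E v = 1 := if_pos hv
    omega

lemma tmap_inj {m : ℕ} {P₀ P₁ P₀' P₁' : Finset (ℕ × ℕ)} {E E' : Finset ℕ}
    (h₀ : IsBinaryNet m P₀) (h₁ : IsBinaryNet m P₁) (hE : E ⊆ Finset.range (2 ^ m))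
    (h₀' : IsBinaryNet m P₀') (h₁' : IsBinaryNet m P₁') (hE' : E' ⊆ Finset.range (2 ^ m))
    (h : tmap m P₀ P₁ E = tmap m P₀' P₁' E') : P₀ = P₀' ∧ P₁ = P₁' ∧ E = E' := by
  refine ⟨?_, ?_, ?_⟩
  · have e1 := tmap_lower (P₁ := P₁) (E := E) h₀
    have e2 := tmap_lower (P₁ := P₁') (E := E') h₀'
    rw [← e1, ← e2, h]
  · have e1 := tmap_upper (E := E) h₀ h₁
    have e2 := tmap_upper (E := E') h₀' h₁'
    rw [← e1, ← e2, h]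
  · have e1 := tmap_E (P₁ := P₁) h₀ hE
    have e2 := tmap_E (P₁ := P₁') h₀' hE'
    rw [← e1, ← e2, h]
lemma net_low_half {m : ℕ} {P : Finset (ℕ × ℕ)} (hP : IsBinaryNet (m + 1) P) {v : ℕ}
    (hv : v < 2 ^ m) :
    (P.filter (fun q => q.1 < 2 ^ m ∧ q.2 / 2 = v)).card = 1 := by
  have h := hP.2.2 1 (by omega) 0 (by norm_num) v (by simpa using hv)
  rw [← h]
  congr 1
  apply filter_congr
  intro q hq
  have hb := (net_bounds hP hq).1
  simp only [Nat.add_sub_cancel, pow_one]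
  rw [div_pow_zero]

lemma net_up_half {m : ℕ} {P : Finset (ℕ × ℕ)} (hP : IsBinaryNet (m + 1) P) {v : ℕ}
    (hv : v < 2 ^ m) :
    (P.filter (fun q => 2 ^ m ≤ q.1 ∧ q.2 / 2 = v)).card = 1 := by
  have h := hP.2.2 1 (by omega) 1 (by norm_num) v (by simpa using hv)
  rw [← h]
  congr 1
  apply filter_congr
  intro q hq
  have hb := (net_bounds hP hq).1
  simp only [Nat.add_sub_cancel, pow_one]
  rw [div_pow_one hb]
lemma net_decomp {m : ℕ} {P : Finset (ℕ × ℕ)} (hP : IsBinaryNet (m + 1) P) :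
    ∃ P₀ P₁ E, IsBinaryNet m P₀ ∧ IsBinaryNet m P₁ ∧ E ⊆ Finset.range (2 ^ m) ∧
      tmap m P₀ P₁ E = P := by
  classical
  have hp2 : (2:ℕ) ^ (m + 1) = 2 ^ m * 2 := pow_succ 2 m
  have h0net : IsBinaryNet m ((P.filter (fun q => q.1 < 2 ^ m)).image (fun q => (q.1, q.2 / 2))) := by
    have hinj : Set.InjOn (fun q : ℕ × ℕ => (q.1, q.2 / 2))
        ((P.filter (fun q => q.1 < 2 ^ m) : Finset (ℕ × ℕ)) : Set (ℕ × ℕ)) := by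
      intro q hq q' hq' hh
      simp only [coe_filter, Set.mem_setOf_eq] at hq hq'
      have hh' : (q.1, q.2 / 2) = (q'.1, q'.2 / 2) := hh
      have h1 := congrArg Prod.fst hh'
      exact net_col_inj hP hq.1 hq'.1 h1
    refine ⟨?_, ?_, ?_⟩
    · intro q hq
      obtain ⟨p, hp, rfl⟩ := mem_image.mp hq
      rw [mem_filter] at hp
      have hb := net_bounds hP hp.1
      simp only [mem_product, mem_range]
      exact ⟨hp.2, by omega⟩
    · rw [card_image_of_injOn hinj, net_half_card hP]
    · intro j hj a ha b hb
      rw [filter_image, card_image_of_injOn (hinj.mono (coe_subset.mpr (filter_subset _ _))),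
        filter_filter]
      refine Eq.trans ?_ (hP.2.2 (j + 1) (by omega) a
        (lt_of_lt_of_le ha (Nat.pow_le_pow_right (by norm_num) (by omega))) b
        (by rw [Nat.succ_sub_succ]; exact hb))
      congr 1
      apply filter_congr
      intro q hq
      have hdd : q.2 / 2 / 2 ^ j = q.2 / 2 ^ (j + 1) := by
        rw [Nat.div_div_eq_div_mul, ← pow_succ']
      rw [Nat.succ_sub_succ]
      constructor
      · rintro ⟨h0, h12⟩
        have h1 : q.1 / 2 ^ (m - j) = a := h12.1
        have h2 : q.2 / 2 / 2 ^ j = b := h12.2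
        rw [hdd] at h2
        exact ⟨h1, h2⟩
      · rintro ⟨h1, h2⟩
        have h2' : q.2 / 2 / 2 ^ j = b := by rw [hdd]; exact h2
        exact ⟨(div_lt_iff_lt_pow q.1 hj).mp (by rw [h1]; exact ha), h1, h2'⟩
  have h1net : IsBinaryNet m ((P.filter (fun q => 2 ^ m ≤ q.1)).image (fun q => (q.1 - 2 ^ m, q.2 / 2))) := by
    have hinj : Set.InjOn (fun q : ℕ × ℕ => (q.1 - 2 ^ m, q.2 / 2))
        ((P.filter (fun q => 2 ^ m ≤ q.1) : Finset (ℕ × ℕ)) : Set (ℕ × ℕ)) := by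
      intro q hq q' hq' hh
      simp only [coe_filter, Set.mem_setOf_eq] at hq hq'
      have h1 : q.1 - 2 ^ m = q'.1 - 2 ^ m := congrArg Prod.fst hh
      have h2 : q.1 = q'.1 := by
        have := hq.2
        have := hq'.2
        omega
      exact net_col_inj hP hq.1 hq'.1 h2
    refine ⟨?_, ?_, ?_⟩
    · intro q hq
      obtain ⟨p, hp, rfl⟩ := mem_image.mp hq
      rw [mem_filter] at hp
      have hb := net_bounds hP hp.1
      have hge := hp.2
      simp only [mem_product, mem_range]
      exact ⟨by omega, by omega⟩
    · rw [card_image_of_injOn hinj, net_upper_card hP]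
    · intro j hj a ha b hb
      rw [filter_image, card_image_of_injOn (hinj.mono (coe_subset.mpr (filter_subset _ _))),
        filter_filter]
      have hbd : 2 ^ j + a < 2 ^ (j + 1) := by
        have := pow_succ 2 j
        omega
      refine Eq.trans ?_ (hP.2.2 (j + 1) (by omega) (2 ^ j + a) hbd b
        (by rw [Nat.succ_sub_succ]; exact hb))
      congr 1
      apply filter_congr
      intro q hq
      have hdd : q.2 / 2 / 2 ^ j = q.2 / 2 ^ (j + 1) := by
        rw [Nat.div_div_eq_div_mul, ← pow_succ']
      rw [Nat.succ_sub_succ]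
      constructor
      · rintro ⟨h0, h12⟩
        have h1 : (q.1 - 2 ^ m) / 2 ^ (m - j) = a := h12.1
        have h2 : q.2 / 2 / 2 ^ j = b := h12.2
        rw [hdd] at h2
        have hk : q.1 = 2 ^ m + (q.1 - 2 ^ m) := by omega
        have hud := upper_div (m := m) (j := j) (q.1 - 2 ^ m) hj
        rw [← hk] at hud
        refine ⟨?_, h2⟩
        rw [hud, h1]
      · rintro ⟨h1, h2⟩
        have h1' : q.1 / 2 ^ (m - j) = 2 ^ j + a := h1
        have h0 : 2 ^ m ≤ q.1 := by
          by_contra hcon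
          push_neg at hcon
          have hlt := (div_lt_iff_lt_pow q.1 hj).mpr hcon
          rw [h1'] at hlt
          exact absurd (Nat.le_add_right (2 ^ j) a) (not_le.mpr hlt)
        have hk : q.1 = 2 ^ m + (q.1 - 2 ^ m) := by omega
        have hud := upper_div (m := m) (j := j) (q.1 - 2 ^ m) hj
        rw [← hk] at hud
        rw [hud] at h1'
        have h1'' : (q.1 - 2 ^ m) / 2 ^ (m - j) = a := Nat.add_left_cancel h1'
        have h2' : q.2 / 2 / 2 ^ j = b := by rw [hdd]; exact h2
        exact ⟨h0, h1'', h2'⟩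
  refine ⟨_, _, (Finset.range (2 ^ m)).filter (fun v => ∃ q ∈ P, q.1 < 2 ^ m ∧ q.2 = 2 * v + 1),
    h0net, h1net, filter_subset _ _, ?_⟩
  have hsub : P ⊆ tmap m ((P.filter (fun q => q.1 < 2 ^ m)).image (fun q => (q.1, q.2 / 2)))
      ((P.filter (fun q => 2 ^ m ≤ q.1)).image (fun q => (q.1 - 2 ^ m, q.2 / 2)))
      ((Finset.range (2 ^ m)).filter (fun v => ∃ q ∈ P, q.1 < 2 ^ m ∧ q.2 = 2 * v + 1)) := by
    intro q hq
    have hbq := net_bounds hP hq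
    simp only [tmap, mem_union]
    rcases lt_or_ge q.1 (2 ^ m) with hlow | hhigh
    · left
      refine mem_image.mpr ⟨(q.1, q.2 / 2), mem_image_of_mem _ (mem_filter.mpr ⟨hq, hlow⟩), ?_⟩
      have hebit : ebit ((Finset.range (2 ^ m)).filter
          (fun v => ∃ q ∈ P, q.1 < 2 ^ m ∧ q.2 = 2 * v + 1)) (q.2 / 2) = q.2 % 2 := by
        rcases Nat.mod_two_eq_zero_or_one q.2 with hpar | hpar
        · have hnot : q.2 / 2 ∉ (Finset.range (2 ^ m)).filter
              (fun v => ∃ q ∈ P, q.1 < 2 ^ m ∧ q.2 = 2 * v + 1) := by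
            rw [mem_filter]
            rintro ⟨-, q', hq', hq'1, hq'2⟩
            have huniq := net_low_half hP (show q.2 / 2 < 2 ^ m by omega)
            have hqq : q = q' :=
              eq_of_card_filter_one huniq hq ⟨hlow, rfl⟩ hq' ⟨hq'1, by rw [hq'2]; omega⟩
            rw [← hqq] at hq'2
            omega
          simp only [ebit]
          rw [if_neg hnot, hpar]
        · have hin : q.2 / 2 ∈ (Finset.range (2 ^ m)).filter
              (fun v => ∃ q ∈ P, q.1 < 2 ^ m ∧ q.2 = 2 * v + 1) := by
            rw [mem_filter]
            exact ⟨mem_range.mpr (by omega), q, hq, hlow, by omega⟩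
          simp only [ebit]
          rw [if_pos hin, hpar]
      show (q.1, 2 * (q.2 / 2) + ebit _ (q.2 / 2)) = q
      rw [hebit]
      have hc : 2 * (q.2 / 2) + q.2 % 2 = q.2 := by omega
      rw [hc]
    · right
      refine mem_image.mpr ⟨(q.1 - 2 ^ m, q.2 / 2), mem_image_of_mem _ (mem_filter.mpr ⟨hq, hhigh⟩), ?_⟩
      have hebit : ebit ((Finset.range (2 ^ m)).filter
          (fun v => ∃ q ∈ P, q.1 < 2 ^ m ∧ q.2 = 2 * v + 1)) (q.2 / 2) = 1 - q.2 % 2 := by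
        rcases Nat.mod_two_eq_zero_or_one q.2 with hpar | hpar
        · have hrow := net_row hP (show 2 * (q.2 / 2) + 1 < 2 ^ (m + 1) by omega)
          obtain ⟨q', hq', hq'2⟩ := exists_of_card_filter_one hrow
          have hq'low : q'.1 < 2 ^ m := by
            by_contra hcon
            push_neg at hcon
            have huniq := net_up_half hP (show q.2 / 2 < 2 ^ m by omega)
            have hqq : q = q' :=
              eq_of_card_filter_one huniq hq ⟨hhigh, rfl⟩ hq' ⟨hcon, by rw [hq'2]; omega⟩
            rw [← hqq] at hq'2
            omega
          have hin : q.2 / 2 ∈ (Finset.range (2 ^ m)).filter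
              (fun v => ∃ q ∈ P, q.1 < 2 ^ m ∧ q.2 = 2 * v + 1) := by
            rw [mem_filter]
            exact ⟨mem_range.mpr (by omega), q', hq', hq'low, hq'2⟩
          simp only [ebit]
          rw [if_pos hin, hpar]
        · have hnot : q.2 / 2 ∉ (Finset.range (2 ^ m)).filter
              (fun v => ∃ q ∈ P, q.1 < 2 ^ m ∧ q.2 = 2 * v + 1) := by
            rw [mem_filter]
            rintro ⟨-, q', hq', hq'1, hq'2⟩
            have hqq : q' = q := net_row_inj hP hq' hq (by rw [hq'2]; omega)
            rw [hqq] at hq'1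
            omega
          simp only [ebit]
          rw [if_neg hnot, hpar]
      show (2 ^ m + (q.1 - 2 ^ m), 2 * (q.2 / 2) + 1 - ebit _ (q.2 / 2)) = q
      rw [hebit]
      have c1 : 2 ^ m + (q.1 - 2 ^ m) = q.1 := by omega
      have c2 : 2 * (q.2 / 2) + 1 - (1 - q.2 % 2) = q.2 := by omega
      rw [c1, c2]
  have hcard := (tmap_isNet (E := (Finset.range (2 ^ m)).filter
      (fun v => ∃ q ∈ P, q.1 < 2 ^ m ∧ q.2 = 2 * v + 1)) h0net h1net).2.1
  exact (eq_of_subset_of_card_le hsub (le_of_eq (hcard.trans hP.2.1.symm))).symm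
noncomputable def netsF (m : ℕ) : Finset (Finset (ℕ × ℕ)) :=
  @Finset.filter _ (IsBinaryNet m) (Classical.decPred _)
    ((Finset.range (2 ^ m) ×ˢ Finset.range (2 ^ m)).powerset)

lemma mem_netsF {m : ℕ} {P : Finset (ℕ × ℕ)} : P ∈ netsF m ↔ IsBinaryNet m P := by
  rw [netsF,
    @Finset.mem_filter (Finset (ℕ × ℕ)) (IsBinaryNet m) (Classical.decPred _) _ _, mem_powerset]
  exact ⟨fun h => h.2, fun h => ⟨h.1, h⟩⟩

lemma netsF_zero : netsF 0 = {{(0, 0)}} := by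
  ext P
  rw [mem_netsF, mem_singleton]
  constructor
  · intro h
    have hsub : P ⊆ {(0, 0)} := by
      intro q hq
      have h2 := net_bounds h hq
      rw [mem_singleton]
      exact Prod.ext (by omega) (by omega)
    exact eq_of_subset_of_card_le hsub (by rw [h.2.1]; simp)
  · rintro rfl
    refine ⟨?_, by simp, ?_⟩
    · intro q hq
      rw [mem_singleton] at hq
      subst hq
      simp
    · intro j hj a ha b hb
      have hj0 : j = 0 := by omega
      subst hj0
      have ha0 : a = 0 := by omega
      have hb0 : b = 0 := by omega
      subst ha0; subst hb0
      simp only [pow_zero, Nat.sub_zero, Nat.div_one]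
      decide
lemma netsF_succ (m : ℕ) :
    (netsF (m + 1)).card = (netsF m).card * (netsF m).card * 2 ^ 2 ^ m := by
  rw [show (netsF m).card * (netsF m).card * 2 ^ 2 ^ m
      = ((netsF m ×ˢ netsF m) ×ˢ (Finset.range (2 ^ m)).powerset).card by
        rw [card_product, card_product, card_powerset, card_range]]
  refine (Finset.card_bij (fun x _ => tmap m x.1.1 x.1.2 x.2) ?_ ?_ ?_).symm
  · rintro ⟨⟨P₀, P₁⟩, E⟩ hx
    simp only [mem_product, mem_powerset] at hx
    exact mem_netsF.mpr (tmap_isNet (mem_netsF.mp hx.1.1) (mem_netsF.mp hx.1.2))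
  · rintro ⟨⟨P₀, P₁⟩, E⟩ hx ⟨⟨P₀', P₁'⟩, E'⟩ hx' heq
    simp only [mem_product, mem_powerset] at hx hx'
    obtain ⟨e0, e1, e2⟩ := tmap_inj (mem_netsF.mp hx.1.1) (mem_netsF.mp hx.1.2) hx.2
      (mem_netsF.mp hx'.1.1) (mem_netsF.mp hx'.1.2) hx'.2 heq
    simp [e0, e1, e2]
  · intro P hP
    obtain ⟨P₀, P₁, E, h0, h1, hE, ht⟩ := net_decomp (mem_netsF.mp hP)
    exact ⟨((P₀, P₁), E),
      by simp only [mem_product, mem_powerset]; exact ⟨⟨mem_netsF.mpr h0, mem_netsF.mpr h1⟩, hE⟩, ht⟩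

lemma netsF_card (m : ℕ) : (netsF m).card = 2 ^ (m * 2 ^ (m - 1)) := by
  induction m with
  | zero => rw [netsF_zero]; simp
  | succ n ih =>
    rw [netsF_succ, ih, ← pow_add, ← pow_add]
    congr 1
    rcases n with _ | k
    · norm_num
    · simp only [Nat.succ_sub_one]
      rw [pow_succ]
      ring

/-- The number of binary `(0,m,2)`-nets whose points have coordinates `k·2^{-m}` is
`2^{m·2^{m-1}}`. -/
theorem card_binary_nets (m : ℕ) (hm : 1 ≤ m) :
    {P : Finset (ℕ × ℕ) | IsBinaryNet m P}.ncard = 2 ^ (m * 2 ^ (m - 1)) := by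
  have hset : {P : Finset (ℕ × ℕ) | IsBinaryNet m P} = ↑(netsF m) := by
    ext P
    simp only [Set.mem_setOf_eq, Finset.mem_coe, mem_netsF]
  rw [hset, Set.ncard_coe_finset, netsF_card]
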